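/- Let T ∈ M_n(ℂ) satisfy Tr(ρ^{-1} T* T) = δ², where ρ is the (invertible, diagonal) density matrix of a δ-form ψ on M_n(ℂ). Then A(x) := T x T* is a quantum adjacency matrix for (M_n(ℂ), ψ), i.e., m(A⊗A)m* = δ² A. The key identity is: for every S ∈ M_n(ℂ), Σ_{k=1}^n f_{ik} S f_{kj} = Tr(ρ^{-1} S) f_{ij}, where f_{ij} are the adapted matrix units. -/

import Mathlib

open scoped TensorProduct
open TensorProduct

noncomputable section


open scoped TensorProduct
open TensorProduct

noncomputable section

variable {B : Type*} [Ring B] [StarRing B] [Algebra ℂ B] [StarModule ℂ B]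
  [Module.Finite ℂ B] [Module.Free ℂ B]

/-- The multiplication map `m : B ⊗ B → B`. -/
abbrev mulMap (B : Type*) [Ring B] [Algebra ℂ B] : B ⊗[ℂ] B →ₗ[ℂ] B := LinearMap.mul' ℂ B

/-- `ψ ⊗ ψ` as a functional on `B ⊗ B`. -/
def psi2 (ψ : B →ₗ[ℂ] ℂ) : B ⊗[ℂ] B →ₗ[ℂ] ℂ :=
  (TensorProduct.lid ℂ ℂ).toLinearMap ∘ₗ TensorProduct.map ψ ψ

/-- `ψ ⊗ id : B ⊗ B → B`. -/
def psiOne (ψ : B →ₗ[ℂ] ℂ) : B ⊗[ℂ] B →ₗ[ℂ] B :=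
  (TensorProduct.lid ℂ B).toLinearMap ∘ₗ TensorProduct.map ψ LinearMap.id

/-- `ψ` is a faithful state. -/
def IsState (ψ : B →ₗ[ℂ] ℂ) : Prop :=
  ψ 1 = 1 ∧ (∀ x : B, 0 ≤ (ψ (star x * x)).re ∧ (ψ (star x * x)).im = 0) ∧
    ∀ x : B, ψ (star x * x) = 0 → x = 0

/-- `mstar` is the adjoint of multiplication w.r.t. the GNS inner products of `ψ`:
`⟪y ⊗ z, m*(x)⟫_{ψ⊗ψ} = ⟪y * z, x⟫_ψ`. -/
def IsAdjointMul (ψ : B →ₗ[ℂ] ℂ) (mstar : B →ₗ[ℂ] B ⊗[ℂ] B) : Prop :=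
  ∀ x y z : B, psi2 ψ ((star y ⊗ₜ[ℂ] star z) * mstar x) = ψ (star (y * z) * x)

/-- `ψ` is a `δ`-form: `m m* = δ² id`. -/
def IsDeltaForm (mstar : B →ₗ[ℂ] B ⊗[ℂ] B) (δ : ℝ) : Prop :=
  ∀ x : B, mulMap B (mstar x) = ((δ : ℂ)^2) • x

/-- `A` is a quantum adjacency matrix: `m (A ⊗ A) m* = δ² A`. -/
def IsQAdj (mstar : B →ₗ[ℂ] B ⊗[ℂ] B) (δ : ℝ) (A : B →ₗ[ℂ] B) : Prop :=
  ∀ x : B, mulMap B (TensorProduct.map A A (mstar x)) = ((δ : ℂ)^2) • A x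

/-- The quantum edge indicator `ε = (1/δ²)(1 ⊗ A) m*(1)`. -/
def edgeInd (mstar : B →ₗ[ℂ] B ⊗[ℂ] B) (δ : ℝ) (A : B →ₗ[ℂ] B) : B ⊗[ℂ] B :=
  (((δ : ℂ)^2)⁻¹) • (LinearMap.lTensor B A) (mstar 1)

/-- The `#`-multiplication on `B ⊗ B`: `(a⊗b)#(c⊗d) = (ac)⊗(db)` (i.e. `B ⊗ Bᵒᵖ`). -/
def hashMul (ξ η : B ⊗[ℂ] B) : B ⊗[ℂ] B :=
  (TensorProduct.congr (LinearEquiv.refl ℂ B) (MulOpposite.opLinearEquiv ℂ (M := B))).symm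
    ((TensorProduct.congr (LinearEquiv.refl ℂ B) (MulOpposite.opLinearEquiv ℂ (M := B))) ξ *
      (TensorProduct.congr (LinearEquiv.refl ℂ B) (MulOpposite.opLinearEquiv ℂ (M := B))) η)

/-- The (conjugate-linear) star operation on `B ⊗ B`, `star (a ⊗ b) = star a ⊗ star b`,
defined via a choice of basis. -/
def starT (ξ : B ⊗[ℂ] B) : B ⊗[ℂ] B :=
  ∑ p : Module.Free.ChooseBasisIndex ℂ B × Module.Free.ChooseBasisIndex ℂ B,
    (starRingEnd ℂ)
      (((Module.Free.chooseBasis ℂ B).tensorProduct (Module.Free.chooseBasis ℂ B)).repr ξ p) •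
      (star ((Module.Free.chooseBasis ℂ B) p.1) ⊗ₜ[ℂ] star ((Module.Free.chooseBasis ℂ B) p.2))

/-- The `B`-valued inner product on `B ⊗ B`: `⟨a⊗b, c⊗d⟩_B = ψ(a*c) b* d`. -/
def bip (ψ : B →ₗ[ℂ] ℂ) (ξ η : B ⊗[ℂ] B) : B := psiOne ψ (starT ξ * η)

/-- Positivity in a star ring. -/
def IsPosEl {R : Type*} [Ring R] [StarRing R] (x : R) : Prop := ∃ y, x = star y * y

/-- Complete positivity of a linear map on `B`. -/
def IsCP (A : B →ₗ[ℂ] B) : Prop :=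
  ∀ (n : ℕ) (M : Matrix (Fin n) (Fin n) B), IsPosEl M → IsPosEl (M.map A)

/-- The map `A_ξ : x ↦ δ² (ψ ⊗ 1)(x · ξ)`. -/
def Axi (ψ : B →ₗ[ℂ] ℂ) (δ : ℝ) (ξ : B ⊗[ℂ] B) : B →ₗ[ℂ] B :=
  ((δ : ℂ)^2) • ((psiOne ψ) ∘ₗ ((LinearMap.mul ℂ (B ⊗[ℂ] B)).flip ξ) ∘ₗ
    (Algebra.TensorProduct.includeLeft : B →ₐ[ℂ] B ⊗[ℂ] B).toLinearMap)

/-- The quantum edge correspondence `E_G = B · ε_G · B` as a subspace of `B ⊗ B`. -/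
def EGspan (mstar : B →ₗ[ℂ] B ⊗[ℂ] B) (δ : ℝ) (A : B →ₗ[ℂ] B) : Submodule ℂ (B ⊗[ℂ] B) :=
  Submodule.span ℂ
    {z : B ⊗[ℂ] B | ∃ x y : B, z = (x ⊗ₜ[ℂ] (1 : B)) * edgeInd mstar δ A * ((1 : B) ⊗ₜ[ℂ] y)}

/-- The state `x ↦ Tr(ρ x)` on `M_n(ℂ)` with `ρ = diag r`. -/
def psiM {n : ℕ} (r : Fin n → ℝ) : Matrix (Fin n) (Fin n) ℂ →ₗ[ℂ] ℂ where
  toFun x := ∑ i, (r i : ℂ) * x i i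
  map_add' x y := by simp [Matrix.add_apply, mul_add, Finset.sum_add_distrib]
  map_smul' c x := by
    simp only [Matrix.smul_apply, smul_eq_mul, RingHom.id_apply]
    rw [Finset.mul_sum]
    congr 1; ext i; ring

/-- Adapted matrix units for `(M_n(ℂ), Tr(ρ ·))`. -/
def fM {n : ℕ} (r : Fin n → ℝ) (i j : Fin n) : Matrix (Fin n) (Fin n) ℂ :=
  ((Real.sqrt (r i * r j) : ℂ))⁻¹ • Matrix.single i j 1



section AuxStmt18
open Matrix

omit [StarRing B] [StarModule ℂ B] [Module.Finite ℂ B] [Module.Free ℂ B] in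
lemma aux_psi2_tmul (ψ : B →ₗ[ℂ] ℂ) (a b : B) : psi2 ψ (a ⊗ₜ[ℂ] b) = ψ a * ψ b := by
  simp [psi2]

lemma aux_psiM_apply {n : ℕ} (r : Fin n → ℝ) (x : Matrix (Fin n) (Fin n) ℂ) :
    psiM r x = ∑ i, (r i : ℂ) * x i i := rfl

lemma aux_psiM_E_mul {n : ℕ} (r : Fin n → ℝ) (j i : Fin n) (X : Matrix (Fin n) (Fin n) ℂ) :
    psiM r (Matrix.single j i 1 * X) = (r j : ℂ) * X i j := by
  simp [aux_psiM_apply, Matrix.mul_apply, Matrix.single, ite_and, Finset.sum_ite_eq',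
    Finset.sum_ite_eq]

lemma aux_psiM_mul_E {n : ℕ} (r : Fin n → ℝ) (a b : Fin n) (X : Matrix (Fin n) (Fin n) ℂ) :
    psiM r (X * Matrix.single a b 1) = (r b : ℂ) * X b a := by
  simp [aux_psiM_apply, Matrix.mul_apply, Matrix.single, ite_and, Finset.sum_ite_eq',
    Finset.sum_ite_eq]

lemma aux_E_sandwich {n : ℕ} (i j b : Fin n) (S : Matrix (Fin n) (Fin n) ℂ) :
    Matrix.single i b (1:ℂ) * S * Matrix.single b j 1 = S b b • Matrix.single i j 1 := by
  ext a c
  simp [Matrix.mul_apply, Matrix.single, Matrix.smul_apply, Finset.sum_ite_eq,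
    ite_and, Finset.sum_ite_eq']
  by_cases h1 : i = a <;> by_cases h2 : j = c <;> simp [h1, h2, mul_comm]

lemma aux_sum_E_diag (n : ℕ) : ∑ i : Fin n, Matrix.single i i (1:ℂ) = 1 := by
  ext a b
  simp [Matrix.sum_apply, Matrix.single, Matrix.one_apply, Finset.filter_and]
  by_cases h : a = b <;> simp [h, Finset.filter_eq']

set_option maxHeartbeats 1000000 in
lemma aux_nondeg {n : ℕ} (r : Fin n → ℝ) (hr : ∀ i, 0 < r i)
    (ξ : Matrix (Fin n) (Fin n) ℂ ⊗[ℂ] Matrix (Fin n) (Fin n) ℂ)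
    (h : ∀ y z : Matrix (Fin n) (Fin n) ℂ,
      psi2 (psiM r) ((star y ⊗ₜ[ℂ] star z) * ξ) = 0) : ξ = 0 := by
  classical
  set b : Module.Basis (Fin n × Fin n) ℂ (Matrix (Fin n) (Fin n) ℂ) :=
    Matrix.stdBasis ℂ (Fin n) (Fin n) with hb
  set B2 := b.tensorProduct b with hB2
  have star_E : ∀ i j : Fin n, star (Matrix.single i j (1:ℂ)) = Matrix.single j i 1 := by
    intro i j; ext a c
    simp [Matrix.star_apply, Matrix.single, and_comm, apply_ite]
  have key : ∀ p : (Fin n × Fin n) × (Fin n × Fin n), B2.repr ξ p = 0 := by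
    rintro ⟨⟨i, j⟩, ⟨k, l⟩⟩
    have h0 := h (Matrix.single i j 1) (Matrix.single k l 1)
    rw [star_E, star_E] at h0
    set L : Matrix (Fin n) (Fin n) ℂ ⊗[ℂ] Matrix (Fin n) (Fin n) ℂ →ₗ[ℂ] ℂ :=
      (psi2 (psiM r)) ∘ₗ
        (LinearMap.mulLeft ℂ ((Matrix.single j i 1 : Matrix (Fin n) (Fin n) ℂ) ⊗ₜ[ℂ]
          (Matrix.single l k 1 : Matrix (Fin n) (Fin n) ℂ)))
      with hL
    have h0' : L ξ = 0 := h0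
    have hLbasis : ∀ p : (Fin n × Fin n) × (Fin n × Fin n),
        L (B2 p) = if p = ((i, j), (k, l)) then (r j : ℂ) * (r l : ℂ) else 0 := by
      rintro ⟨⟨a, c⟩, ⟨d, e⟩⟩
      rw [hB2, Module.Basis.tensorProduct_apply, hb, Matrix.stdBasis_eq_single,
        Matrix.stdBasis_eq_single]
      simp only [hL, LinearMap.comp_apply, LinearMap.mulLeft_apply,
        Algebra.TensorProduct.tmul_mul_tmul, aux_psi2_tmul, aux_psiM_E_mul]
      simp [Matrix.single, Prod.ext_iff, ite_and]
      split_ifs <;> simp_all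
    rw [← B2.sum_repr ξ, map_sum] at h0'
    simp only [_root_.map_smul, hLbasis, smul_eq_mul, mul_ite, mul_zero,
      Finset.sum_ite_eq', Finset.mem_univ, if_true] at h0'
    have hrj : (r j : ℂ) ≠ 0 := by exact_mod_cast (hr j).ne'
    have hrl : (r l : ℂ) ≠ 0 := by exact_mod_cast (hr l).ne'
    rcases mul_eq_zero.mp h0' with h1 | h1
    · exact h1
    · exact absurd h1 (mul_ne_zero hrj hrl)
  have hz : B2.repr ξ = 0 := Finsupp.ext fun p => key p
  exact B2.repr.map_eq_zero_iff.mp hz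

set_option maxHeartbeats 1000000 in
lemma aux_mstar_eq {n : ℕ} (r : Fin n → ℝ) (hr : ∀ i, 0 < r i)
    (mstar : Matrix (Fin n) (Fin n) ℂ →ₗ[ℂ] Matrix (Fin n) (Fin n) ℂ ⊗[ℂ] Matrix (Fin n) (Fin n) ℂ)
    (hadj : IsAdjointMul (psiM r) mstar) (x : Matrix (Fin n) (Fin n) ℂ) :
    mstar x = ∑ a : Fin n, ∑ b : Fin n,
      (((r b : ℝ) : ℂ))⁻¹ • ((x * Matrix.single a b 1) ⊗ₜ[ℂ] Matrix.single b a 1) := by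
  rw [← sub_eq_zero]
  apply aux_nondeg r hr
  intro y z
  rw [mul_sub, map_sub, hadj x y z, sub_eq_zero]
  rw [Finset.mul_sum, map_sum]
  have step : ∀ a b : Fin n,
      psi2 (psiM r) ((star y ⊗ₜ[ℂ] star z) *
        ((((r b : ℝ) : ℂ))⁻¹ • ((x * Matrix.single a b 1) ⊗ₜ[ℂ] Matrix.single b a 1)))
      = (r a : ℂ) * ((star z) a b * ((star y * x) b a)) := by
    intro a b
    rw [mul_smul_comm, _root_.map_smul, Algebra.TensorProduct.tmul_mul_tmul, aux_psi2_tmul,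
      ← mul_assoc (star y) x, aux_psiM_mul_E, aux_psiM_mul_E]
    have hb : ((r b : ℝ) : ℂ) ≠ 0 := by exact_mod_cast (hr b).ne'
    field_simp
    linear_combination ((star y * x) b a * (r a : ℂ) * star z a b) * mul_inv_cancel₀ hb
  calc psiM r (star (y * z) * x)
      = ∑ a, (r a : ℂ) * ((star z * (star y * x)) a a) := by
        rw [StarMul.star_mul, mul_assoc]; rfl
    _ = ∑ a, ∑ b, (r a : ℂ) * ((star z) a b * ((star y * x) b a)) := by
        congr 1; ext a; rw [Matrix.mul_apply, Finset.mul_sum]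
    _ = ∑ a, psi2 (psiM r) ((star y ⊗ₜ[ℂ] star z) * ∑ b,
          ((((r b : ℝ) : ℂ))⁻¹ • ((x * Matrix.single a b 1) ⊗ₜ[ℂ] Matrix.single b a 1))) := by
        congr 1; ext a
        rw [Finset.mul_sum, map_sum]
        congr 1; ext b
        rw [step a b]

lemma aux_sqrt_coeff {n : ℕ} (r : Fin n → ℝ) (hr : ∀ i, 0 < r i) (i k j : Fin n) :
    ((Real.sqrt (r i * r k) : ℂ))⁻¹ * ((Real.sqrt (r k * r j) : ℂ))⁻¹
      = (((r k)⁻¹ : ℝ) : ℂ) * ((Real.sqrt (r i * r j) : ℂ))⁻¹ := by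
  have h : Real.sqrt (r i * r k) * Real.sqrt (r k * r j) = r k * Real.sqrt (r i * r j) := by
    rw [Real.sqrt_mul (hr i).le, Real.sqrt_mul (hr k).le, Real.sqrt_mul (hr i).le]
    rw [show Real.sqrt (r i) * Real.sqrt (r k) * (Real.sqrt (r k) * Real.sqrt (r j))
        = (Real.sqrt (r k) * Real.sqrt (r k)) * (Real.sqrt (r i) * Real.sqrt (r j)) by ring,
      Real.mul_self_sqrt (hr k).le]
  rw [← mul_inv]
  rw [show ((Real.sqrt (r i * r k) : ℂ)) * ((Real.sqrt (r k * r j) : ℂ))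
      = (((Real.sqrt (r i * r k) * Real.sqrt (r k * r j) : ℝ)) : ℂ) by push_cast; ring, h]
  push_cast
  rw [mul_inv]

end AuxStmt18

/-- If `Tr(ρ⁻¹ T* T) = δ²` then `A(x) = T x T*` is a quantum adjacency matrix on
`(M_n(ℂ), ψ)`; the key identity is `∑ₖ f_{ik} S f_{kj} = Tr(ρ⁻¹ S) f_{ij}`. -/
theorem stmt_18 {n : ℕ} (hn : 0 < n) (r : Fin n → ℝ) (hr : ∀ i, 0 < r i)
    (δ : ℝ) (hδ : 0 < δ) (htrace : ∑ i, (r i)⁻¹ = δ ^ 2)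
    (hstate : IsState (psiM r))
    (mstar : Matrix (Fin n) (Fin n) ℂ →ₗ[ℂ] Matrix (Fin n) (Fin n) ℂ ⊗[ℂ] Matrix (Fin n) (Fin n) ℂ)
    (hadj : IsAdjointMul (psiM r) mstar)
    (hdelta : IsDeltaForm mstar δ)
    (T : Matrix (Fin n) (Fin n) ℂ)
    (hT : ∑ k, (((r k)⁻¹ : ℝ) : ℂ) * (star T * T) k k = ((δ : ℂ))^2) :
    (∀ (S : Matrix (Fin n) (Fin n) ℂ) (i j : Fin n),
      ∑ k, fM r i k * S * fM r k j = (∑ k, (((r k)⁻¹ : ℝ) : ℂ) * S k k) • fM r i j) ∧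
    IsQAdj mstar δ ((LinearMap.mulRight ℂ (star T)) ∘ₗ (LinearMap.mulLeft ℂ T)) := by
  constructor
  · intro S i j
    rw [Finset.sum_smul]
    refine Finset.sum_congr rfl fun k _ => ?_
    unfold fM
    rw [Matrix.smul_mul, Matrix.smul_mul, Matrix.mul_smul, aux_E_sandwich, smul_smul, smul_smul,
      smul_smul]
    have hc : ((Real.sqrt (r i * r k) : ℂ))⁻¹ * ((Real.sqrt (r k * r j) : ℂ))⁻¹ * S k k
        = (((r k)⁻¹ : ℝ) : ℂ) * S k k * ((Real.sqrt (r i * r j) : ℂ))⁻¹ := by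
      rw [aux_sqrt_coeff r hr i k j]; ring
    rw [hc]
  · intro x
    set A := (LinearMap.mulRight ℂ (star T)) ∘ₗ (LinearMap.mulLeft ℂ T) with hA
    have hAapp : ∀ u : Matrix (Fin n) (Fin n) ℂ, A u = T * u * star T := fun u => rfl
    rw [aux_mstar_eq r hr mstar hadj x]
    simp only [map_sum, _root_.map_smul, TensorProduct.map_tmul, LinearMap.mul'_apply, hAapp]
    have step : ∀ a b : Fin n,
        (((r b : ℝ) : ℂ))⁻¹ • (T * (x * Matrix.single a b 1) * star T *
          (T * Matrix.single b a 1 * star T))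
        = ((((r b : ℝ) : ℂ))⁻¹ * ((star T * T) b b)) •
            (T * x * Matrix.single a a 1 * star T) := by
      intro a b
      have h1 : T * (x * Matrix.single a b 1) * star T *
            (T * Matrix.single b a 1 * star T)
          = T * x * (Matrix.single a b 1 * (star T * T) *
              Matrix.single b a 1) * star T := by
        noncomm_ring
      rw [h1, aux_E_sandwich, mul_smul_comm, smul_mul_assoc, smul_smul]
    simp only [step]
    have col : ∀ a : Fin n,
        ∑ b : Fin n, ((((r b : ℝ) : ℂ))⁻¹ * ((star T * T) b b)) •
          (T * x * Matrix.single a a 1 * star T)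
        = ((δ : ℂ)^2) • (T * x * Matrix.single a a 1 * star T) := by
      intro a
      have hT2 : ∑ k, ((r k : ℂ))⁻¹ * (star T * T) k k = ((δ : ℂ))^2 := by
        push_cast at hT; exact hT
      have hT3 : ∑ k, (((r k : ℝ) : ℂ))⁻¹ * (star T * T) k k = ((δ : ℂ))^2 := hT2
      rw [← Finset.sum_smul, hT3]
    simp only [col]
    rw [← Finset.smul_sum]
    congr 1
    calc ∑ a : Fin n, T * x * Matrix.single a a 1 * star T
        = T * x * (∑ a : Fin n, Matrix.single a a 1) * star T := by
          rw [Finset.mul_sum, Finset.sum_mul]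
      _ = T * x * star T := by rw [aux_sum_E_diag]; simp
      _ = A x := rfl


end
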